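/- Let μ, ν, λ ∈ Par_n with N_{μ,ν,λ} > 0. Then for all disjoint subsets X, Y ⊆ [n], the subset-sum inequality 0 ≤ Σ_{i∈X} μ_i + Σ_{i∈Y} ν_i − Σ_{i∈Y} μ_i − Σ_{i∈X} ν_i + Σ_{i=1}^{|X|+|Y|} λ_i holds. -/

import Mathlib

/-- `μ` is a partition with at most `n` parts: a weakly decreasing sequence
`μ 0 ≥ μ 1 ≥ ⋯` of naturals (the paper's part `μ_{i+1}` is `μ i`, i.e. we use
0-indexing) vanishing from index `n` on. -/
def IsPartitionN (n : ℕ) (μ : ℕ → ℕ) : Prop :=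
  Antitone μ ∧ ∀ i, n ≤ i → μ i = 0

/-- The cells `(row, column)` (both 0-indexed) of the skew shape `lam/mu`. -/
def skewCells (lam mu : ℕ → ℕ) : Set (ℕ × ℕ) :=
  {p | mu p.1 ≤ p.2 ∧ p.2 < lam p.1}

/-- `T` is a Littlewood–Richardson skew tableau of shape `lam/mu` and content
`nu`: the shape `mu` is contained in `lam`, rows weakly increase, columns
strictly increase, the (0-indexed) letter `t` occurs `nu t` times, and every
prefix of the reverse reading word (rows read right-to-left, top-to-bottom)
contains at least as many letters `t` as letters `t+1`. -/
def IsLRTableau (lam mu nu : ℕ → ℕ) (T : ℕ × ℕ → ℕ) : Prop :=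
  (∀ i, mu i ≤ lam i) ∧
  (∀ i j j', mu i ≤ j → j ≤ j' → j' < lam i → T (i, j) ≤ T (i, j')) ∧
  (∀ i j, (i, j) ∈ skewCells lam mu → (i + 1, j) ∈ skewCells lam mu →
    T (i, j) < T (i + 1, j)) ∧
  (∀ t, Set.ncard {p ∈ skewCells lam mu | T p = t} = nu t) ∧
  (∀ i j t,
    Set.ncard {p ∈ skewCells lam mu |
        T p = t + 1 ∧ (p.1 < i ∨ (p.1 = i ∧ j ≤ p.2))} ≤
      Set.ncard {p ∈ skewCells lam mu |
        T p = t ∧ (p.1 < i ∨ (p.1 = i ∧ j ≤ p.2))})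

/-- The Littlewood–Richardson coefficient `c^{lam}_{mu,nu}`: the number of
Littlewood–Richardson skew tableaux of shape `lam/mu` and content `nu`
(tableaux are normalized to vanish off the shape). -/
noncomputable def lrCoeff (lam mu nu : ℕ → ℕ) : ℕ :=
  Set.ncard {T : ℕ × ℕ → ℕ | IsLRTableau lam mu nu T ∧
    ∀ p ∉ skewCells lam mu, T p = 0}

/-- The Newell–Littlewood number
`N_{μ,ν,λ} = ∑_{α,β,γ} c^μ_{α,β} c^ν_{α,γ} c^λ_{β,γ}`, realized as the number
of tuples `((α, β, γ), (T₁, T₂, T₃))` where `α, β, γ` are partitions and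
`T₁, T₂, T₃` are Littlewood–Richardson tableaux witnessing the coefficients
`c^μ_{α,β}`, `c^ν_{α,γ}` and `c^λ_{β,γ}` respectively. -/
noncomputable def nlNumber (mu nu lam : ℕ → ℕ) : ℕ :=
  Set.ncard {x : ((ℕ → ℕ) × (ℕ → ℕ) × (ℕ → ℕ)) ×
      ((ℕ × ℕ → ℕ) × (ℕ × ℕ → ℕ) × (ℕ × ℕ → ℕ)) |
    Antitone x.1.1 ∧ Antitone x.1.2.1 ∧ Antitone x.1.2.2 ∧
    (IsLRTableau mu x.1.1 x.1.2.1 x.2.1 ∧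
      ∀ p ∉ skewCells mu x.1.1, x.2.1 p = 0) ∧
    (IsLRTableau nu x.1.1 x.1.2.2 x.2.2.1 ∧
      ∀ p ∉ skewCells nu x.1.1, x.2.2.1 p = 0) ∧
    (IsLRTableau lam x.1.2.1 x.1.2.2 x.2.2.2 ∧
      ∀ p ∉ skewCells lam x.1.2.1, x.2.2.2 p = 0)}

/-- For `I = {i₁ < ⋯ < i_d} ⊆ {0, 1, 2, …}` (the 0-indexed version of the
paper's subsets of positive integers), `tauPartition I` is `τ(I)`, i.e. the
partition whose (0-indexed) part `t` is `i_{d-t} − (d−t−1) - 1`; for the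
paper's 1-indexed sets this is `τ(I) = (i_d − d ≥ ⋯ ≥ i₂ − 2 ≥ i₁ − 1)`. -/
def tauPartition (I : Finset ℕ) : ℕ → ℕ := fun t =>
  if t < I.card then
    (I.sort (· ≤ ·)).getD (I.card - 1 - t) 0 - (I.card - 1 - t)
  else 0

section NLAux

open Finset


lemma sorted_getD_mem {A : Finset ℕ} {j : ℕ} (hj : j < A.card) :
    (A.sort (· ≤ ·)).getD j 0 ∈ A := by
  rw [List.getD_eq_getElem _ _ (by rwa [Finset.length_sort])]
  exact (Finset.mem_sort _).1 (List.getElem_mem _)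

lemma sorted_getD_strictMono {A : Finset ℕ} {j j' : ℕ} (hj' : j' < A.card) (h : j < j') :
    (A.sort (· ≤ ·)).getD j 0 < (A.sort (· ≤ ·)).getD j' 0 := by
  have hj : j < A.card := h.trans hj'
  rw [List.getD_eq_getElem _ _ (by rwa [Finset.length_sort]),
    List.getD_eq_getElem _ _ (by rwa [Finset.length_sort])]
  exact (A.sortedLT_sort.getElem_lt_getElem_iff).2 h

lemma sorted_getD_lt {A : Finset ℕ} {j : ℕ} {b : ℕ}
    (hb : j < (A.filter (· < b)).card) :
    (A.sort (· ≤ ·)).getD j 0 < b := by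
  have hj : j < A.card := hb.trans_le (Finset.card_filter_le _ _)
  by_contra hge
  push_neg at hge
  have hsub : (A.filter (· < b)) ⊆ ((A.sort (· ≤ ·)).take j).toFinset := by
    intro a ha
    rw [Finset.mem_filter] at ha
    have haL : a ∈ A.sort (· ≤ ·) := (Finset.mem_sort _).2 ha.1
    obtain ⟨i, hi, rfl⟩ := List.getElem_of_mem haL
    have hij : i < j := by
      by_contra hij
      push_neg at hij
      have hle : (A.sort (· ≤ ·)).getD j 0 ≤ (A.sort (· ≤ ·))[i] := by
        rcases eq_or_lt_of_le hij with rfl | hlt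
        · rw [List.getD_eq_getElem _ _ (by rwa [Finset.length_sort])]
        · rw [List.getD_eq_getElem _ _ (by rwa [Finset.length_sort])]
          exact le_of_lt ((A.sortedLT_sort.getElem_lt_getElem_iff).2 hlt)
      exact absurd (lt_of_le_of_lt (hge.trans hle) ha.2) (lt_irrefl _)
    rw [List.mem_toFinset]
    exact List.mem_take_iff_getElem.2 ⟨i, lt_min hij hi, rfl⟩
  have h1 := (Finset.card_le_card hsub).trans (List.toFinset_card_le _)
  rw [List.length_take] at h1
  omega

lemma filter_inst_eq {α : Type*} (s : Finset α) (p : α → Prop) (i1 i2 : DecidablePred p) :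
    @Finset.filter _ p i1 s = @Finset.filter _ p i2 s := by
  have : i1 = i2 := Subsingleton.elim _ _
  rw [this]

section Tableau

variable (N : ℕ) (lam mu : ℕ → ℕ)

/-- Finset of cells of the skew shape. -/
def cellsF : Finset (ℕ × ℕ) :=
  (Finset.range N ×ˢ Finset.range (lam 0 + 1)).filter
    (fun p => mu p.1 ≤ p.2 ∧ p.2 < lam p.1)

/-- Reading-order key of a cell. -/
def Kf : ℕ × ℕ → ℕ := fun p => p.1 * (lam 0 + 1) + (lam 0 - p.2)

variable {N lam mu} (ha : Antitone lam) (hv : ∀ i, N ≤ i → lam i = 0)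
include ha hv

lemma mem_cellsF {p : ℕ × ℕ} :
    p ∈ cellsF N lam mu ↔ (mu p.1 ≤ p.2 ∧ p.2 < lam p.1) := by
  unfold cellsF
  simp only [Finset.mem_filter, Finset.mem_product, Finset.mem_range]
  constructor
  · tauto
  · intro h2
    refine ⟨⟨?_, ?_⟩, h2⟩
    · by_contra hbig
      push_neg at hbig
      have := hv p.1 hbig
      omega
    · have := ha (Nat.zero_le p.1)
      omega

lemma cellsF_coe : (cellsF N lam mu : Set (ℕ × ℕ)) = skewCells lam mu := by
  ext p
  rw [Finset.mem_coe, mem_cellsF ha hv]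
  rfl

lemma col_le {p : ℕ × ℕ} (hp : p ∈ cellsF N lam mu) : p.2 ≤ lam 0 := by
  rw [mem_cellsF ha hv] at hp
  have := ha (Nat.zero_le p.1)
  omega

lemma Kf_fst {p : ℕ × ℕ} (hp : p ∈ cellsF N lam mu) : Kf lam p / (lam 0 + 1) = p.1 := by
  have h2 := col_le ha hv hp
  unfold Kf
  rw [mul_comm, Nat.mul_add_div (by omega), Nat.div_eq_of_lt (by omega), add_zero]

lemma Kf_snd {p : ℕ × ℕ} (hp : p ∈ cellsF N lam mu) :
    lam 0 - Kf lam p % (lam 0 + 1) = p.2 := by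
  have h2 := col_le ha hv hp
  unfold Kf
  rw [mul_comm, Nat.mul_add_mod, Nat.mod_eq_of_lt (by omega)]
  omega

lemma Kf_injOn {p q : ℕ × ℕ} (hp : p ∈ cellsF N lam mu) (hq : q ∈ cellsF N lam mu)
    (h : Kf lam p = Kf lam q) : p = q := by
  have h1 := Kf_fst ha hv hp; have h2 := Kf_fst ha hv hq
  have h3 := Kf_snd ha hv hp; have h4 := Kf_snd ha hv hq
  rw [h] at h1 h3
  exact Prod.ext (h1 ▸ h2.symm ▸ rfl) (by rw [← h3, ← h4])

lemma Kf_le_iff {p b : ℕ × ℕ} (hp : p ∈ cellsF N lam mu) (hb : b ∈ cellsF N lam mu) :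
    Kf lam p ≤ Kf lam b ↔ (p.1 < b.1 ∨ (p.1 = b.1 ∧ b.2 ≤ p.2)) := by
  have h2 := col_le ha hv hp
  have h4 := col_le ha hv hb
  unfold Kf
  rcases Nat.lt_trichotomy p.1 b.1 with hlt | heq | hgt
  · constructor
    · intro _; exact Or.inl hlt
    · intro _
      have : p.1 + 1 ≤ b.1 := hlt
      nlinarith [Nat.sub_le (lam 0) p.2, Nat.sub_le (lam 0) b.2]
  · rw [heq]; omega
  · have : b.1 + 1 ≤ p.1 := hgt
    constructor
    · intro hle
      exfalso
      nlinarith [Nat.sub_le (lam 0) p.2, Nat.sub_le (lam 0) b.2]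
    · intro hor; omega

open scoped Classical in
lemma ncard_eq_card_filter (P : ℕ × ℕ → Prop) :
    {p ∈ skewCells lam mu | P p}.ncard = ((cellsF N lam mu).filter P).card := by
  rw [← Set.ncard_coe_finset]
  congr 1
  ext p
  simp only [Finset.coe_filter, Set.mem_setOf_eq, Set.mem_sep_iff, Finset.mem_coe]
  rw [mem_cellsF ha hv]
  exact and_congr_left (fun _ => Iff.rfl)

lemma card_filter_row (i : ℕ) :
    ((cellsF N lam mu).filter (fun p => p.1 = i)).card = lam i - mu i := by
  classical
  have himg : (cellsF N lam mu).filter (fun p => p.1 = i) =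
      (Finset.Ico (mu i) (lam i)).image (fun j => (i, j)) := by
    ext p
    simp only [Finset.mem_filter, Finset.mem_image, Finset.mem_Ico]
    rw [mem_cellsF ha hv]
    constructor
    · rintro ⟨⟨h1, h2⟩, rfl⟩
      exact ⟨p.2, ⟨h1, h2⟩, rfl⟩
    · rintro ⟨j, ⟨h1, h2⟩, rfl⟩
      exact ⟨⟨h1, h2⟩, rfl⟩
  rw [himg, Finset.card_image_of_injective _ (fun a b hab => by
    simpa using hab), Nat.card_Ico]

lemma card_filter_rows (S : Finset ℕ) :
    ((cellsF N lam mu).filter (fun p => p.1 ∈ S)).card = ∑ i ∈ S, (lam i - mu i) := by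
  classical
  have hbi : (cellsF N lam mu).filter (fun p => p.1 ∈ S) =
      S.biUnion (fun i => (cellsF N lam mu).filter (fun p => p.1 = i)) := by
    ext p
    simp only [Finset.mem_filter, Finset.mem_biUnion]
    constructor
    · rintro ⟨hc, hS⟩; exact ⟨p.1, hS, hc, rfl⟩
    · rintro ⟨i, hS, hc, rfl⟩; exact ⟨hc, hS⟩
  rw [hbi, Finset.card_biUnion]
  · exact Finset.sum_congr rfl (fun i _ => card_filter_row ha hv i)
  · intro a _ b _ hab
    simp only [Finset.disjoint_left, Finset.mem_filter]
    rintro p ⟨_, rfl⟩ ⟨_, h⟩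
    exact hab h

end Tableau

section Keys

variable (N : ℕ) (lam mu nu : ℕ → ℕ) (T : ℕ × ℕ → ℕ)

open scoped Classical in
/-- keys of cells with entry `t`. -/
noncomputable def KT (t : ℕ) : Finset ℕ :=
  ((cellsF N lam mu).filter (fun p => T p = t)).image (Kf lam)

/-- entry of a key. -/
def Tei : ℕ → ℕ := fun k => T (k / (lam 0 + 1), lam 0 - k % (lam 0 + 1))

open scoped Classical in
/-- the chain step on keys. -/
noncomputable def stepf : ℕ → ℕ := fun k =>
  ((KT N lam mu T (Tei lam T k - 1)).sort (· ≤ ·)).getD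
    (((KT N lam mu T (Tei lam T k)).filter (· < k)).card) 0

variable {N lam mu nu T} (ha : Antitone lam) (hv : ∀ i, N ≤ i → lam i = 0)
include ha hv

lemma mem_KT {k t : ℕ} :
    k ∈ KT N lam mu T t ↔ ∃ p ∈ cellsF N lam mu, T p = t ∧ Kf lam p = k := by
  classical
  unfold KT
  simp only [Finset.mem_image, Finset.mem_filter]
  constructor
  · rintro ⟨p, ⟨hc, ht⟩, rfl⟩; exact ⟨p, hc, ht, rfl⟩
  · rintro ⟨p, hc, ht, rfl⟩; exact ⟨p, ⟨hc, ht⟩, rfl⟩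

lemma Tei_of_mem {k t : ℕ} (hk : k ∈ KT N lam mu T t) : Tei lam T k = t := by
  obtain ⟨p, hc, ht, rfl⟩ := (mem_KT ha hv).1 hk
  unfold Tei
  rw [Kf_fst ha hv hc, Kf_snd ha hv hc]
  exact ht

variable (hlr : IsLRTableau lam mu nu T)
include hlr

lemma card_KT (t : ℕ) : (KT N lam mu T t).card = nu t := by
  classical
  unfold KT
  rw [Finset.card_image_of_injOn (fun p hp q hq hpq =>
    Kf_injOn ha hv (Finset.mem_filter.1 hp).1 (Finset.mem_filter.1 hq).1 hpq)]
  rw [← hlr.2.2.2.1 t, ncard_eq_card_filter ha hv]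
  congr 1
  exact filter_inst_eq _ _ _ _

lemma lattice_keys {t k : ℕ} (hk : k ∈ KT N lam mu T (t + 1)) :
    ((KT N lam mu T (t + 1)).filter (· ≤ k)).card ≤
      ((KT N lam mu T t).filter (· < k)).card := by
  classical
  obtain ⟨b, hbc, hbt, rfl⟩ := (mem_KT ha hv).1 hk
  -- card of key-filter equals card of cell-filter
  have key : ∀ s : ℕ, ((KT N lam mu T s).filter (· ≤ Kf lam b)).card =
      ((cellsF N lam mu).filter
        (fun p => T p = s ∧ (p.1 < b.1 ∨ (p.1 = b.1 ∧ b.2 ≤ p.2)))).card := by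
    intro s
    have himg : (KT N lam mu T s).filter (· ≤ Kf lam b) =
        ((cellsF N lam mu).filter
          (fun p => T p = s ∧ (p.1 < b.1 ∨ (p.1 = b.1 ∧ b.2 ≤ p.2)))).image (Kf lam) := by
      ext k'
      simp only [Finset.mem_filter, Finset.mem_image]
      constructor
      · rintro ⟨hk', hle⟩
        obtain ⟨p, hc, hts, rfl⟩ := (mem_KT ha hv).1 hk'
        exact ⟨p, ⟨hc, hts, (Kf_le_iff ha hv hc hbc).1 hle⟩, rfl⟩
      · rintro ⟨p, ⟨hc, hts, hcond⟩, rfl⟩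
        exact ⟨(mem_KT ha hv).2 ⟨p, hc, hts, rfl⟩, (Kf_le_iff ha hv hc hbc).2 hcond⟩
    rw [himg, Finset.card_image_of_injOn (fun p hp q hq hpq =>
      Kf_injOn ha hv (Finset.mem_filter.1 hp).1 (Finset.mem_filter.1 hq).1 hpq)]
  have hlat := hlr.2.2.2.2 b.1 b.2 t
  rw [ncard_eq_card_filter ha hv, ncard_eq_card_filter ha hv] at hlat
  -- strict vs non-strict filter on KT t
  have hknot : Kf lam b ∉ KT N lam mu T t := by
    intro hmem
    have := Tei_of_mem ha hv hmem
    have h2 : Tei lam T (Kf lam b) = t + 1 := Tei_of_mem ha hv hk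
    omega
  have hstrict : (KT N lam mu T t).filter (· < Kf lam b) =
      (KT N lam mu T t).filter (· ≤ Kf lam b) := by
    ext k'
    simp only [Finset.mem_filter]
    constructor
    · rintro ⟨h1, h2⟩; exact ⟨h1, le_of_lt h2⟩
    · rintro ⟨h1, h2⟩
      refine ⟨h1, lt_of_le_of_ne h2 ?_⟩
      rintro rfl
      exact hknot h1
  rw [hstrict, key, key]
  convert hlat using 2 <;> exact filter_inst_eq _ _ _ _

lemma card_filter_le_succ {t k : ℕ} (hk : k ∈ KT N lam mu T (t + 1)) :
    ((KT N lam mu T (t + 1)).filter (· < k)).card <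
      ((KT N lam mu T t).filter (· < k)).card := by
  classical
  have h1 : (KT N lam mu T (t + 1)).filter (· ≤ k) =
      insert k ((KT N lam mu T (t + 1)).filter (· < k)) := by
    ext k'
    simp only [Finset.mem_filter, Finset.mem_insert]
    constructor
    · rintro ⟨h1, h2⟩
      rcases eq_or_lt_of_le h2 with rfl | hlt
      · exact Or.inl rfl
      · exact Or.inr ⟨h1, hlt⟩
    · rintro (rfl | ⟨h1, h2⟩)
      · exact ⟨hk, le_refl _⟩
      · exact ⟨h1, le_of_lt h2⟩
  have h2 : k ∉ (KT N lam mu T (t + 1)).filter (· < k) := by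
    simp only [Finset.mem_filter]
    rintro ⟨_, h⟩
    exact lt_irrefl _ h
  have h3 := lattice_keys ha hv hlr hk
  rw [h1, Finset.card_insert_of_notMem h2] at h3
  omega

lemma stepf_mem {t k : ℕ} (hk : k ∈ KT N lam mu T (t + 1)) :
    stepf N lam mu T k ∈ KT N lam mu T t ∧ stepf N lam mu T k < k := by
  have hTe : Tei lam T k = t + 1 := Tei_of_mem ha hv hk
  have hlt := card_filter_le_succ ha hv hlr hk
  unfold stepf
  rw [hTe]
  simp only [Nat.add_sub_cancel]
  constructor
  · exact sorted_getD_mem (lt_of_lt_of_le hlt (Finset.card_filter_le _ _))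
  · exact sorted_getD_lt hlt

lemma stepf_row {t k : ℕ} (hk : k ∈ KT N lam mu T (t + 1)) :
    stepf N lam mu T k / (lam 0 + 1) < k / (lam 0 + 1) := by
  obtain ⟨hmem, hlt⟩ := stepf_mem ha hv hlr hk
  obtain ⟨q, hqc, hqt, hq⟩ := (mem_KT ha hv).1 hmem
  obtain ⟨p, hpc, hpt, hp⟩ := (mem_KT ha hv).1 hk
  rw [← hq, ← hp, Kf_fst ha hv hqc, Kf_fst ha hv hpc]
  rcases (Kf_le_iff ha hv hqc hpc).1 (le_of_lt (by rw [hq, hp]; exact hlt)) with h | ⟨h1, h2⟩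
  · exact h
  · exfalso
    have hrow := hlr.2.1 p.1 p.2 q.2 ((mem_cellsF ha hv).1 hpc).1 h2
      (by rw [← h1]; exact ((mem_cellsF ha hv).1 hqc).2)
    rw [Prod.mk.eta] at hrow
    rw [show ((p.1, q.2) : ℕ × ℕ) = q from Prod.ext h1.symm rfl] at hrow
    omega

lemma stepf_inj {t k k' : ℕ} (hk : k ∈ KT N lam mu T (t + 1))
    (hk' : k' ∈ KT N lam mu T (t + 1)) (he : stepf N lam mu T k = stepf N lam mu T k') :
    k = k' := by
  classical
  rcases Nat.lt_trichotomy k k' with hlt | heq | hgt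
  · exfalso
    have hTe : Tei lam T k = t + 1 := Tei_of_mem ha hv hk
    have hTe' : Tei lam T k' = t + 1 := Tei_of_mem ha hv hk'
    have hj : ((KT N lam mu T (t + 1)).filter (· < k)).card <
        ((KT N lam mu T (t + 1)).filter (· < k')).card := by
      apply Finset.card_lt_card
      rw [Finset.ssubset_iff_of_subset]
      · exact ⟨k, by simp only [Finset.mem_filter]; exact ⟨hk, hlt⟩,
          by simp only [Finset.mem_filter]; rintro ⟨_, h⟩; exact lt_irrefl _ h⟩
      · intro x hx
        simp only [Finset.mem_filter] at hx ⊢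
        exact ⟨hx.1, hx.2.trans hlt⟩
    have hcard := (card_filter_le_succ ha hv hlr hk').trans_le (Finset.card_filter_le _ _)
    have := sorted_getD_strictMono (A := KT N lam mu T t) hcard hj
    unfold stepf at he
    rw [hTe, hTe'] at he
    simp only [Nat.add_sub_cancel] at he
    omega
  · exact heq
  · exfalso
    have hTe : Tei lam T k = t + 1 := Tei_of_mem ha hv hk
    have hTe' : Tei lam T k' = t + 1 := Tei_of_mem ha hv hk'
    have hj : ((KT N lam mu T (t + 1)).filter (· < k')).card <
        ((KT N lam mu T (t + 1)).filter (· < k)).card := by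
      apply Finset.card_lt_card
      rw [Finset.ssubset_iff_of_subset]
      · exact ⟨k', by simp only [Finset.mem_filter]; exact ⟨hk', hgt⟩,
          by simp only [Finset.mem_filter]; rintro ⟨_, h⟩; exact lt_irrefl _ h⟩
      · intro x hx
        simp only [Finset.mem_filter] at hx ⊢
        exact ⟨hx.1, hx.2.trans hgt⟩
    have hcard := (card_filter_le_succ ha hv hlr hk).trans_le (Finset.card_filter_le _ _)
    have := sorted_getD_strictMono (A := KT N lam mu T t) hcard hj
    unfold stepf at he
    rw [hTe, hTe'] at he
    simp only [Nat.add_sub_cancel] at he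
    omega

lemma iter_mem : ∀ (m t : ℕ), m ≤ t → ∀ k ∈ KT N lam mu T t,
    (stepf N lam mu T)^[m] k ∈ KT N lam mu T (t - m) := by
  intro m
  induction m with
  | zero => intro t _ k hk; simpa using hk
  | succ m ih =>
    intro t hm k hk
    obtain ⟨t', rfl⟩ : ∃ t', t = t' + 1 := ⟨t - 1, by omega⟩
    rw [Function.iterate_succ_apply]
    have h1 := (stepf_mem ha hv hlr hk).1
    have h2 := ih t' (by omega) _ h1
    have : t' + 1 - (m + 1) = t' - m := by omega
    rw [this]
    exact h2

lemma iter_row : ∀ (m t : ℕ), m ≤ t → ∀ k ∈ KT N lam mu T t,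
    (stepf N lam mu T)^[m] k / (lam 0 + 1) + m ≤ k / (lam 0 + 1) := by
  intro m
  induction m with
  | zero => intro t _ k _; simp
  | succ m ih =>
    intro t hm k hk
    obtain ⟨t', rfl⟩ : ∃ t', t = t' + 1 := ⟨t - 1, by omega⟩
    rw [Function.iterate_succ_apply]
    have h1 := (stepf_mem ha hv hlr hk).1
    have h2 := ih t' (by omega) _ h1
    have h3 := stepf_row ha hv hlr hk
    omega

lemma iter_inj : ∀ (m t : ℕ), m ≤ t → ∀ k ∈ KT N lam mu T t, ∀ k' ∈ KT N lam mu T t,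
    (stepf N lam mu T)^[m] k = (stepf N lam mu T)^[m] k' → k = k' := by
  intro m
  induction m with
  | zero => intro t _ k _ k' _ h; simpa using h
  | succ m ih =>
    intro t hm k hk k' hk' he
    obtain ⟨t', rfl⟩ : ∃ t', t = t' + 1 := ⟨t - 1, by omega⟩
    rw [Function.iterate_succ_apply, Function.iterate_succ_apply] at he
    have h1 := (stepf_mem ha hv hlr hk).1
    have h2 := (stepf_mem ha hv hlr hk').1
    exact stepf_inj ha hv hlr hk hk' (ih t' (by omega) _ h1 _ h2 he)

lemma sum_nu_lt (d : ℕ) :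
    ((cellsF N lam mu).filter (fun p => T p < d)).card = ∑ t ∈ Finset.range d, nu t := by
  classical
  induction d with
  | zero => simp
  | succ d ih =>
    have hsplit : (cellsF N lam mu).filter (fun p => T p < d + 1) =
        ((cellsF N lam mu).filter (fun p => T p < d)) ∪
          ((cellsF N lam mu).filter (fun p => T p = d)) := by
      ext p
      simp only [Finset.mem_filter, Finset.mem_union]
      by_cases hc : p ∈ cellsF N lam mu <;> simp [hc] <;> omega
    have hdisj : Disjoint ((cellsF N lam mu).filter (fun p => T p < d))
        ((cellsF N lam mu).filter (fun p => T p = d)) := by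
      simp only [Finset.disjoint_left, Finset.mem_filter]
      rintro p ⟨_, h1⟩ ⟨_, h2⟩
      omega
    have hcardeq : ((cellsF N lam mu).filter (fun p => T p = d)).card = nu d := by
      rw [← hlr.2.2.2.1 d, ncard_eq_card_filter ha hv]
      congr 1
      exact filter_inst_eq _ _ _ _
    rw [hsplit, Finset.card_union_of_disjoint hdisj, ih, hcardeq,
      Finset.sum_range_succ]

lemma rowLemma (X : Finset ℕ) :
    ∑ i ∈ X, (lam i - mu i) ≤ ∑ t ∈ Finset.range X.card, nu t := by
  classical
  set d := X.card with hd
  set Φ : ℕ × ℕ → ℕ := fun p =>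
    (stepf N lam mu T)^[T p - (X.filter (· < p.1)).card] (Kf lam p) with hΦ
  have memKT_self : ∀ p ∈ cellsF N lam mu, Kf lam p ∈ KT N lam mu T (T p) :=
    fun p hp => (mem_KT ha hv).2 ⟨p, hp, rfl, rfl⟩
  have hrank : ∀ i ∈ X, (X.filter (· < i)).card < d := by
    intro i hi
    apply Finset.card_lt_card
    rw [Finset.ssubset_iff_of_subset (Finset.filter_subset _ _)]
    exact ⟨i, hi, by simp⟩
  -- Φ maps X-cells into KT-sets with small entry
  have hmaps : ∀ p ∈ (cellsF N lam mu).filter (fun p => p.1 ∈ X),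
      Φ p ∈ ((cellsF N lam mu).filter (fun p => T p < d)).image (Kf lam) := by
    intro p hp
    rw [Finset.mem_filter] at hp
    obtain ⟨hpc, hpX⟩ := hp
    have hk := memKT_self p hpc
    have hmem := iter_mem ha hv hlr (T p - (X.filter (· < p.1)).card) (T p)
      (Nat.sub_le _ _) _ hk
    obtain ⟨q, hqc, hqt, hq⟩ := (mem_KT ha hv).1 hmem
    rw [Finset.mem_image]
    refine ⟨q, Finset.mem_filter.2 ⟨hqc, ?_⟩, hq⟩
    have := hrank p.1 hpX
    omega
  -- injectivity (asymmetric auxiliary version)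
  have haux : ∀ p ∈ (cellsF N lam mu).filter (fun p => p.1 ∈ X),
      ∀ p' ∈ (cellsF N lam mu).filter (fun p => p.1 ∈ X),
      Φ p = Φ p' →
      T p' - (X.filter (· < p'.1)).card ≤ T p - (X.filter (· < p.1)).card → p = p' := by
    intro p hp p' hp' he hmm
    rw [Finset.mem_filter] at hp hp'
    obtain ⟨hpc, hpX⟩ := hp
    obtain ⟨hpc', hpX'⟩ := hp'
    set a := (X.filter (· < p.1)).card with hA
    set a' := (X.filter (· < p'.1)).card with hA'
    set t := T p with ht
    set t' := T p' with ht'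
    set m := t - a with hm
    set m' := t' - a' with hm'
    have hk := memKT_self p hpc
    have hk' := memKT_self p' hpc'
    have hs : t - m = t' - m' := by
      have h1 := iter_mem ha hv hlr m t (Nat.sub_le _ _) _ hk
      have h2 := iter_mem ha hv hlr m' t' (Nat.sub_le _ _) _ hk'
      have e1 := Tei_of_mem ha hv h1
      have e2 := Tei_of_mem ha hv h2
      rw [show (stepf N lam mu T)^[m] (Kf lam p) = Φ p from rfl] at e1
      rw [show (stepf N lam mu T)^[m'] (Kf lam p') = Φ p' from rfl] at e2
      rw [he] at e1
      omega
    have hx : (stepf N lam mu T)^[m - m'] (Kf lam p) ∈ KT N lam mu T t' := by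
      have h1 := iter_mem ha hv hlr (m - m') t (by omega) _ hk
      have : t - (m - m') = t' := by omega
      rwa [this] at h1
    have hxk : (stepf N lam mu T)^[m - m'] (Kf lam p) = Kf lam p' := by
      apply iter_inj ha hv hlr m' t' (by omega) _ hx _ hk'
      rw [← Function.iterate_add_apply]
      have : m' + (m - m') = m := by omega
      rw [this]
      exact he
    rcases Nat.eq_or_lt_of_le hmm with heq | hlt
    · -- m = m'
      have : m - m' = 0 := by omega
      rw [this] at hxk
      simp only [Function.iterate_zero_apply] at hxk
      exact Kf_injOn ha hv hpc hpc' hxk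
    · -- m' < m : row decrease gives contradiction
      exfalso
      have hrow := iter_row ha hv hlr (m - m') t (by omega) _ hk
      rw [hxk] at hrow
      rw [Kf_fst ha hv hpc, Kf_fst ha hv hpc'] at hrow
      have hp1 : p'.1 < p.1 := by omega
      have haa : a' < a := by
        rw [hA, hA']
        apply Finset.card_lt_card
        rw [Finset.ssubset_iff_of_subset]
        · exact ⟨p'.1, Finset.mem_filter.2 ⟨hpX', hp1⟩, by simp⟩
        · intro x hx
          simp only [Finset.mem_filter] at hx ⊢
          exact ⟨hx.1, hx.2.trans hp1⟩
      omega
  have hinj : Set.InjOn Φ ((cellsF N lam mu).filter (fun p => p.1 ∈ X)) := by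
    intro p hp p' hp' he
    rcases le_total (T p' - (X.filter (· < p'.1)).card) (T p - (X.filter (· < p.1)).card)
      with hle | hle
    · exact haux p hp p' hp' he hle
    · exact (haux p' hp' p hp he.symm hle).symm
  have hcard := Finset.card_le_card_of_injOn Φ hmaps hinj
  have himgcard : (((cellsF N lam mu).filter (fun p => T p < d)).image (Kf lam)).card =
      ((cellsF N lam mu).filter (fun p => T p < d)).card := by
    apply Finset.card_image_of_injOn
    intro p hp q hq hpq
    exact Kf_injOn ha hv (Finset.mem_filter.1 hp).1 (Finset.mem_filter.1 hq).1 hpq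
  rw [himgcard, sum_nu_lt ha hv hlr] at hcard
  rw [← card_filter_rows ha hv X]
  exact hcard

lemma depthLemma (hmu : Antitone mu) :
    ∀ (k : ℕ) (i c : ℕ), k ≤ i → (i, c) ∈ skewCells lam mu → mu (i - k) ≤ c →
      k ≤ T (i, c) := by
  intro k
  induction k with
  | zero => intro i c _ _ _; exact Nat.zero_le _
  | succ k ih =>
    intro i c hk hcell hmuc
    obtain ⟨h1, h2⟩ := hcell
    simp only at h1 h2
    have hprev : ((i - 1 : ℕ), c) ∈ skewCells lam mu := by
      constructor
      · exact le_trans (hmu (show i - (k+1) ≤ i - 1 by omega)) hmuc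
      · exact lt_of_lt_of_le h2 (ha (show i - 1 ≤ i by omega))
    have hcol := hlr.2.2.1 (i - 1) c hprev
      (by rw [show i - 1 + 1 = i by omega]; exact ⟨h1, h2⟩)
    have hih := ih (i - 1) c (by omega) hprev
      (by rw [show i - 1 - k = i - (k + 1) by omega]; exact hmuc)
    rw [show i - 1 + 1 = i by omega] at hcol
    omega

lemma packLemma (hmu : Antitone mu) (x y : ℕ) :
    ∑ i ∈ Finset.range x, mu i + ∑ t ∈ Finset.range y, nu t ≤
      ∑ i ∈ Finset.range (x + y), lam i := by
  classical
  have hshape : ∀ i, mu i ≤ lam i := hlr.1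
  have hmuv : ∀ i, N ≤ i → mu i = 0 := fun i hi =>
    Nat.le_zero.1 (hv i hi ▸ hshape i)
  -- the inf of rows where mu ≤ c
  set sI : ℕ → ℕ := fun c => sInf {r | mu r ≤ c} with hsI
  have hsI_ne : ∀ c, {r | mu r ≤ c}.Nonempty := fun c =>
    ⟨N, by simp only [Set.mem_setOf_eq, hmuv N (le_refl N)]; exact Nat.zero_le c⟩
  have hsI_iff : ∀ r c, mu r ≤ c ↔ sI c ≤ r := by
    intro r c
    constructor
    · intro h; exact Nat.sInf_le h
    · intro h
      exact le_trans (hmu h) (Nat.sInf_mem (hsI_ne c))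
  -- E2 cells
  set E2 : Finset (ℕ × ℕ) :=
    (cellsF N lam mu).filter (fun p => T p < y ∧ x + y ≤ p.1) with hE2
  set F : Finset (ℕ × ℕ) :=
    (Finset.Ico x (x + y)).biUnion
      (fun i => (Finset.range (mu i)).image (fun c => (i, c))) with hF
  have hFcard : F.card = ∑ i ∈ Finset.Ico x (x + y), mu i := by
    rw [hF, Finset.card_biUnion]
    · refine Finset.sum_congr rfl (fun i _ => ?_)
      rw [Finset.card_image_of_injective _ (fun a b hab => by simpa using hab),
        Finset.card_range]
    · intro i _ j _ hij
      simp only [Finset.disjoint_left, Finset.mem_image, Finset.mem_range]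
      rintro p ⟨c, _, rfl⟩ ⟨c', _, h⟩
      exact hij (congrArg Prod.fst h).symm
  have hE2card : E2.card ≤ ∑ i ∈ Finset.Ico x (x + y), mu i := by
    rw [← hFcard]
    apply Finset.card_le_card_of_injOn
      (fun p => (p.1 + x - max (x + y) (sI p.2), p.2))
    · intro p hp
      simp only [Finset.mem_coe, hE2, Finset.mem_filter] at hp
      obtain ⟨hpc, hTy, hxy⟩ := hp
      have hcell := (mem_cellsF ha hv).1 hpc
      have hsx : sI p.2 ≤ p.1 := (hsI_iff p.1 p.2).1 hcell.1
      have hsy : p.1 < sI p.2 + y := by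
        by_contra hcon
        push_neg at hcon
        have hmu2 : mu (p.1 - y) ≤ p.2 := (hsI_iff _ _).2 (by omega)
        have := depthLemma ha hv hlr hmu y p.1 p.2 (by omega)
          (by rw [← Prod.mk.eta (p := p)] at hpc;
              exact ((cellsF_coe ha hv) ▸ Finset.mem_coe.2 hpc : _)) hmu2
        rw [Prod.mk.eta] at this
        omega
      set M := max (x + y) (sI p.2) with hM
      have hM1 : x + y ≤ M := le_max_left _ _
      have hM2 : sI p.2 ≤ M := le_max_right _ _
      have hMor : M = x + y ∨ M = sI p.2 := by
        rw [hM]; rcases le_total (x + y) (sI p.2) with h | h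
        · right; exact max_eq_right h
        · left; exact max_eq_left h
      have hr1 : x ≤ p.1 + x - M := by omega
      have hr2 : p.1 + x - M < x + y := by omega
      have hrs : p.1 + x - M < sI p.2 := by omega
      have hrmu : p.2 < mu (p.1 + x - M) := by
        by_contra hcon
        push_neg at hcon
        exact absurd ((hsI_iff _ _).1 hcon) (by omega)
      rw [Finset.mem_coe, hF, Finset.mem_biUnion]
      exact ⟨p.1 + x - M, Finset.mem_Ico.2 ⟨hr1, hr2⟩,
        Finset.mem_image.2 ⟨p.2, Finset.mem_range.2 hrmu, rfl⟩⟩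
    · intro p hp p' hp' he
      simp only [Finset.mem_coe, hE2, Finset.mem_filter] at hp hp'
      obtain ⟨hpc, hTy, hxy⟩ := hp
      obtain ⟨hpc', hTy', hxy'⟩ := hp'
      have he' := he
      simp only [Prod.mk.injEq] at he'
      obtain ⟨h1, h2⟩ := he'
      rw [h2] at h1
      have hcell := (mem_cellsF ha hv).1 hpc
      have hcell' := (mem_cellsF ha hv).1 hpc'
      have hsx : sI p'.2 ≤ p.1 := by
        rw [← h2]; exact (hsI_iff p.1 p.2).1 hcell.1
      have hsx' : sI p'.2 ≤ p'.1 := (hsI_iff p'.1 p'.2).1 hcell'.1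
      have hM2 : sI p'.2 ≤ max (x + y) (sI p'.2) := le_max_right _ _
      have hM1 : x + y ≤ max (x + y) (sI p'.2) := le_max_left _ _
      have : p.1 = p'.1 := by omega
      exact Prod.ext this h2
  -- E : all cells with entry < y
  have hEsplit : ((cellsF N lam mu).filter (fun p => T p < y)).card ≤
      ((cellsF N lam mu).filter (fun p => p.1 < x + y)).card + E2.card := by
    have hsub : (cellsF N lam mu).filter (fun p => T p < y) ⊆
        ((cellsF N lam mu).filter (fun p => p.1 < x + y)) ∪ E2 := by
      intro p hp
      rw [Finset.mem_filter] at hp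
      rw [Finset.mem_union, hE2, Finset.mem_filter, Finset.mem_filter]
      rcases Nat.lt_or_ge p.1 (x + y) with h | h
      · exact Or.inl ⟨hp.1, h⟩
      · exact Or.inr ⟨hp.1, hp.2, h⟩
    exact le_trans (Finset.card_le_card hsub) (Finset.card_union_le _ _)
  have hE1card : ((cellsF N lam mu).filter (fun p => p.1 < x + y)).card =
      ∑ i ∈ Finset.range (x + y), (lam i - mu i) := by
    rw [← card_filter_rows ha hv (Finset.range (x + y))]
    congr 1
    apply Finset.filter_congr
    intro p _
    simp [Finset.mem_range]
  have hnu := sum_nu_lt ha hv hlr y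
  have hsum1 : ∑ i ∈ Finset.range (x + y), (lam i - mu i) +
      ∑ i ∈ Finset.range (x + y), mu i = ∑ i ∈ Finset.range (x + y), lam i := by
    rw [← Finset.sum_add_distrib]
    exact Finset.sum_congr rfl (fun i _ => by have := hshape i; omega)
  have hsum2 : ∑ i ∈ Finset.range x, mu i + ∑ i ∈ Finset.Ico x (x + y), mu i =
      ∑ i ∈ Finset.range (x + y), mu i := by
    rw [Finset.range_eq_Ico, Finset.range_eq_Ico]
    exact Finset.sum_Ico_consecutive _ (Nat.zero_le x) (Nat.le_add_right x y)
  omega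

end Keys



end NLAux

/-- If `N_{μ,ν,λ} > 0` then the subset-sum inequalities hold: for disjoint
`X, Y ⊆ [n]`,
`0 ≤ ∑_{i∈X} μ_i + ∑_{i∈Y} ν_i − ∑_{i∈Y} μ_i − ∑_{i∈X} ν_i + ∑_{i=1}^{|X|+|Y|} λ_i`. -/
theorem subset_sum_of_nlNumber_pos (n : ℕ) (μ ν lam : ℕ → ℕ)
    (hμ : IsPartitionN n μ) (hν : IsPartitionN n ν) (hlam : IsPartitionN n lam)
    (hN : 0 < nlNumber μ ν lam)
    (X Y : Finset ℕ) (hX : X ⊆ Finset.range n) (hY : Y ⊆ Finset.range n)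
    (hXY : Disjoint X Y) :
    (0 : ℤ) ≤ (∑ i ∈ X, (μ i : ℤ)) + (∑ i ∈ Y, (ν i : ℤ)) -
      (∑ i ∈ Y, (μ i : ℤ)) - (∑ i ∈ X, (ν i : ℤ)) +
      ∑ i ∈ Finset.range (X.card + Y.card), (lam i : ℤ) := by
  have hne : nlNumber μ ν lam ≠ 0 := Nat.pos_iff_ne_zero.1 hN
  unfold nlNumber at hne
  obtain ⟨w, hw⟩ := Set.nonempty_of_ncard_ne_zero hne
  obtain ⟨⟨α, β, γ⟩, ⟨T1, T2, T3⟩⟩ := w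
  simp only [Set.mem_setOf_eq] at hw
  obtain ⟨hαa, hβa, hγa, ⟨h1, -⟩, ⟨h2, -⟩, ⟨h3, -⟩⟩ := hw
  -- shape containments
  have hαμ : ∀ i, α i ≤ μ i := h1.1
  have hαν : ∀ i, α i ≤ ν i := h2.1
  -- the three numeric inequalities (note: roles of X and Y swapped)
  have RL1 := rowLemma hμ.1 hμ.2 h1 Y
  have RL2 := rowLemma hν.1 hν.2 h2 X
  have PL := packLemma hlam.1 hlam.2 h3 hβa Y.card X.card
  rw [Nat.add_comm Y.card X.card] at PL
  -- cast to ℤ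
  have e1 : ((∑ i ∈ Y, (μ i - α i) : ℕ) : ℤ) = ∑ i ∈ Y, ((μ i : ℤ) - (α i : ℤ)) := by
    rw [Nat.cast_sum]
    exact Finset.sum_congr rfl fun i _ => Nat.cast_sub (hαμ i)
  have e2 : ((∑ i ∈ X, (ν i - α i) : ℕ) : ℤ) = ∑ i ∈ X, ((ν i : ℤ) - (α i : ℤ)) := by
    rw [Nat.cast_sum]
    exact Finset.sum_congr rfl fun i _ => Nat.cast_sub (hαν i)
  have c1 : ∑ i ∈ Y, ((μ i : ℤ) - (ν i : ℤ)) ≤ ∑ i ∈ Y, ((μ i : ℤ) - (α i : ℤ)) :=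
    Finset.sum_le_sum fun i _ => sub_le_sub_left (by exact_mod_cast hαν i) _
  have c2 : ∑ i ∈ X, ((ν i : ℤ) - (μ i : ℤ)) ≤ ∑ i ∈ X, ((ν i : ℤ) - (α i : ℤ)) :=
    Finset.sum_le_sum fun i _ => sub_le_sub_left (by exact_mod_cast hαμ i) _
  have RL1' : ((∑ i ∈ Y, (μ i - α i) : ℕ) : ℤ) ≤ ((∑ t ∈ Finset.range Y.card, β t : ℕ) : ℤ) := by
    exact_mod_cast RL1
  have RL2' : ((∑ i ∈ X, (ν i - α i) : ℕ) : ℤ) ≤ ((∑ t ∈ Finset.range X.card, γ t : ℕ) : ℤ) := by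
    exact_mod_cast RL2
  have PL' : ((∑ i ∈ Finset.range Y.card, β i : ℕ) : ℤ) +
      ((∑ t ∈ Finset.range X.card, γ t : ℕ) : ℤ) ≤
      ((∑ i ∈ Finset.range (X.card + Y.card), lam i : ℕ) : ℤ) := by
    exact_mod_cast PL
  have e3 : ((∑ i ∈ Finset.range (X.card + Y.card), lam i : ℕ) : ℤ) =
      ∑ i ∈ Finset.range (X.card + Y.card), (lam i : ℤ) := by
    rw [Nat.cast_sum]
  have e4 : ∑ i ∈ Y, ((μ i : ℤ) - (ν i : ℤ)) = (∑ i ∈ Y, (μ i : ℤ)) - ∑ i ∈ Y, (ν i : ℤ) :=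
    Finset.sum_sub_distrib _ _
  have e5 : ∑ i ∈ X, ((ν i : ℤ) - (μ i : ℤ)) = (∑ i ∈ X, (ν i : ℤ)) - ∑ i ∈ X, (μ i : ℤ) :=
    Finset.sum_sub_distrib _ _
  linarith [c1, c2, RL1', RL2', PL', e1, e2, e3, e4, e5]
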